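/- Suppose the i.i.d. environment satisfies the tail assumption with some exponent α > 0. Fix r > 0, 0 ≤ s₁ < s₂ ≤ 1 and a < b, and for n ∈ ℕ define N^{(n)} = #{ (i,x) ∈ ℤ² : i + x is even, s₁ < i/n < s₂, a < x/√n < b, ω_{(i,x)} > r·m(n^{3/2}) }. Then E[N^{(n)}] → (1/2)(s₂ − s₁)(b − a) r^{−α} as n → ∞. -/

import Mathlib

open MeasureTheory ProbabilityTheory Filter

noncomputable section

/-- A function `L` is slowly varying (at infinity) if `L (t x) / L x → 1` as `x → ∞`
for every fixed `t > 0`. -/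
def SlowlyVarying (L : ℝ → ℝ) : Prop :=
  ∀ t > 0, Filter.Tendsto (fun x => L (t * x) / L x) Filter.atTop (nhds 1)

/-- `m(t) = inf {x : F̄(x) ≤ 1/t}`. -/
def mFun (Fbar : ℝ → ℝ) (t : ℝ) : ℝ := sInf {x : ℝ | Fbar x ≤ 1 / t}

/-- The nearest-neighbour path determined by a sequence of signs: `s_i = Σ_{j<i} ±1`. -/
def pathOf (n : ℕ) (ε : Fin n → Bool) (i : ℕ) : ℤ :=
  ∑ j : Fin n, if (j : ℕ) < i then (if ε j then (1 : ℤ) else -1) else 0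

/-- Energy of the path encoded by `ε` in environment `ω`. -/
def Hpoly (n : ℕ) (ω : ℤ × ℤ → ℝ) (ε : Fin n → Bool) : ℝ :=
  ∑ i ∈ Finset.Icc 1 n, ω ((i : ℤ), pathOf n ε i)

/-- Partition function restricted to a set of paths. -/
def ZpartOn (n : ℕ) (β : ℝ) (ω : ℤ × ℤ → ℝ) (A : Finset (Fin n → Bool)) : ℝ :=
  (2 : ℝ)⁻¹ ^ n * ∑ ε ∈ A, Real.exp (β * Hpoly n ω ε)

/-- Full partition function `Z^ω_{n,β}`. -/
def Zpart (n : ℕ) (β : ℝ) (ω : ℤ × ℤ → ℝ) : ℝ := ZpartOn n β ω Finset.univ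

/-- Truncated environment `ω̃_v = ω_v 1_{ω_v ≤ k}`. -/
def trunc (k : ℝ) (ω : ℤ × ℤ → ℝ) : ℤ × ℤ → ℝ := fun v => if ω v ≤ k then ω v else 0

/-- Convergence in distribution: convergence of integrals of bounded continuous functions. -/
def TendstoInDistribution {Ω : Type*} [MeasurableSpace Ω] (μ : Measure Ω)
    (X : ℕ → Ω → ℝ) (ν : Measure ℝ) : Prop :=
  ∀ f : ℝ → ℝ, Continuous f → (∃ C, ∀ x, |f x| ≤ C) →
    Filter.Tendsto (fun n => ∫ a, f (X n a) ∂μ) Filter.atTop (nhds (∫ x, f x ∂ν))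

/-- The centered Gaussian law on ℝ with variance `2 π^{-1/2}`. -/
def gaussLimit : Measure ℝ := gaussianReal 0 (Real.toNNReal (2 / Real.sqrt Real.pi))

/-- The block `B = {(i,x) : 1 ≤ i ≤ n, |x| < h}`. -/
def Bblock (n : ℕ) (h : ℤ) : Finset (ℤ × ℤ) := (Finset.Icc (1 : ℤ) n) ×ˢ (Finset.Ioo (-h) h)

/-- Excess weight `M = Σ_{v ∈ B} ω_v 1_{ω_v > k}`. -/
def Mexc (n : ℕ) (h : ℤ) (k : ℝ) (ω : ℤ × ℤ → ℝ) : ℝ :=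
  ∑ v ∈ Bblock n h, if k < ω v then ω v else 0

open Classical in
/-- Paths staying strictly inside the cylinder of half-width `h`. -/
def Cset (n : ℕ) (h : ℤ) : Finset (Fin n → Bool) :=
  Finset.univ.filter (fun ε => ∀ i ∈ Finset.Icc 1 n, |pathOf n ε i| < h)

/-- Simple random walk transition kernel `p(i,x)`. -/
def srw (i : ℕ) (x : ℤ) : ℝ :=
  if x.natAbs ≤ i ∧ ((i : ℤ) + x) % 2 = 0 then
    (2 : ℝ)⁻¹ ^ i * (Nat.choose i (((i : ℤ) + x).toNat / 2) : ℝ)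
  else 0

/-- The lattice points `(i,x)` with `i + x` even, `s₁ < i/n < s₂` and `a < x/√n < b`. -/
def idxSet (n : ℕ) (s₁ s₂ a b : ℝ) : Finset (ℤ × ℤ) :=
  ((Finset.Icc (0 : ℤ) (n : ℤ)) ×ˢ
      (Finset.Icc ⌈a * Real.sqrt n⌉ ⌊b * Real.sqrt n⌋)).filter
    (fun v => (v.1 + v.2) % 2 = 0 ∧ s₁ < (v.1 : ℝ) / n ∧ (v.1 : ℝ) / n < s₂ ∧
      a < (v.2 : ℝ) / Real.sqrt n ∧ (v.2 : ℝ) / Real.sqrt n < b)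

private lemma ratioL_tendsto (L : ℝ → ℝ) (hLpos : ∀ x > 0, 0 < L x) (hL : SlowlyVarying L)
    (r c : ℝ) (hr : 0 < r) (hc : 0 < c) :
    Tendsto (fun x => L (r * x) / L (c * x)) atTop (nhds 1) := by
  have h := (hL r hr).div (hL c hc) one_ne_zero
  rw [div_one] at h
  refine h.congr' ?_ |>.mono_right (le_refl _)
  filter_upwards [eventually_gt_atTop (0:ℝ)] with x hx
  have h1 : L x ≠ 0 := (hLpos x hx).ne'
  simp only [Pi.div_apply]
  rw [div_div_div_cancel_right₀ h1]

private lemma mFun_tendsto_atTop (Fbar : ℝ → ℝ) (hanti : Antitone Fbar)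
    (hpos : ∀ x > 0, 0 < Fbar x) (h0 : Tendsto Fbar atTop (nhds 0)) :
    Tendsto (fun t => mFun Fbar t) atTop atTop := by
  rw [tendsto_atTop]
  intro M
  set M' : ℝ := max M 1 with hM'
  have hM'pos : 0 < M' := lt_of_lt_of_le one_pos (le_max_right _ _)
  have hFM' : 0 < Fbar M' := hpos _ hM'pos
  have h1 : ∀ᶠ t : ℝ in atTop, 1 / t < Fbar M' := by
    have : Tendsto (fun t : ℝ => 1 / t) atTop (nhds 0) := by
      simpa [one_div] using (tendsto_inv_atTop_zero (𝕜 := ℝ))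
    exact this.eventually_lt_const hFM'
  filter_upwards [h1, eventually_gt_atTop (0:ℝ)] with t ht htpos
  have hne : {x : ℝ | Fbar x ≤ 1 / t}.Nonempty := by
    have := (h0.eventually_lt_const (by positivity : (0:ℝ) < 1 / t)).exists
    obtain ⟨x, hx⟩ := this
    exact ⟨x, le_of_lt hx⟩
  refine le_trans (le_max_left M 1) (le_csInf hne ?_)
  intro y hy
  by_contra hcon
  push_neg at hcon
  have := hanti hcon.le
  simp only [Set.mem_setOf_eq] at hy
  linarith

private lemma tail_limit (Fbar L : ℝ → ℝ) (α r : ℝ) (hα : 0 < α) (hr : 0 < r)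
    (hanti : Antitone Fbar) (h0 : Tendsto Fbar atTop (nhds 0))
    (hform : ∀ x > 0, Fbar x = x ^ (-α) * L x) (hLpos : ∀ x > 0, 0 < L x)
    (hL : SlowlyVarying L) :
    Tendsto (fun t => t * Fbar (r * mFun Fbar t)) atTop (nhds (r ^ (-α))) := by
  have hpos : ∀ x > 0, 0 < Fbar x := by
    intro x hx
    rw [hform x hx]
    have := hLpos x hx
    positivity
  have hmtop := mFun_tendsto_atTop Fbar hanti hpos h0
  -- ratio limit for Fbar
  have hratio : ∀ c : ℝ, 0 < c →
      Tendsto (fun t => Fbar (r * mFun Fbar t) / Fbar (c * mFun Fbar t)) atTop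
        (nhds (r ^ (-α) / c ^ (-α))) := by
    intro c hc
    have h1 : Tendsto (fun x => (r ^ (-α) / c ^ (-α)) * (L (r * x) / L (c * x))) atTop
        (nhds ((r ^ (-α) / c ^ (-α)) * 1)) :=
      tendsto_const_nhds.mul (ratioL_tendsto L hLpos hL r c hr hc)
    rw [mul_one] at h1
    have h2 := h1.comp hmtop
    refine Tendsto.congr' ?_ h2
    filter_upwards [hmtop.eventually_ge_atTop 1] with t ht
    set x := mFun Fbar t with hx
    have hxpos : (0:ℝ) < x := lt_of_lt_of_le one_pos ht
    have haux1 : (0:ℝ) < r * x := by positivity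
    have haux2 : (0:ℝ) < c * x := by positivity
    simp only [Function.comp]
    rw [hform _ haux1, hform _ haux2, Real.mul_rpow hr.le hxpos.le,
      Real.mul_rpow hc.le hxpos.le]
    have hx1 : x ^ (-α) ≠ 0 := by positivity
    have hc1 : c ^ (-α) ≠ 0 := by positivity
    rw [show r ^ (-α) * x ^ (-α) * L (r * x) = x ^ (-α) * (r ^ (-α) * L (r * x)) by ring,
      show c ^ (-α) * x ^ (-α) * L (c * x) = x ^ (-α) * (c ^ (-α) * L (c * x)) by ring,
      mul_div_mul_left _ _ hx1]
    rw [div_mul_div_comm]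
  -- main epsilon argument
  rw [Metric.tendsto_nhds]
  intro ε hε
  -- choose δ
  obtain ⟨δ, hδbounds, hδpos⟩ : ∃ δ : ℝ, (δ < 1 ∧ r ^ (-α) / (1 + δ) ^ (-α) < r ^ (-α) + ε / 2 ∧
      r ^ (-α) - ε / 2 < r ^ (-α) / (1 - δ) ^ (-α)) ∧ 0 < δ := by
    have hc1 : ContinuousAt (fun δ : ℝ => r ^ (-α) / (1 + δ) ^ (-α)) 0 := by
      have hbase : ContinuousAt (fun δ : ℝ => (1 + δ) ^ (-α)) 0 := by
        have := (Real.continuousAt_rpow_const (1 + 0) (-α) (Or.inl (by norm_num))).comp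
          ((continuous_const.add continuous_id).continuousAt (x := (0:ℝ)))
        exact this
      exact continuousAt_const.div hbase (by norm_num [Real.one_rpow])
    have hc2 : ContinuousAt (fun δ : ℝ => r ^ (-α) / (1 - δ) ^ (-α)) 0 := by
      have hbase : ContinuousAt (fun δ : ℝ => (1 - δ) ^ (-α)) 0 := by
        have := (Real.continuousAt_rpow_const (1 - 0) (-α) (Or.inl (by norm_num))).comp
          ((continuous_const.sub continuous_id).continuousAt (x := (0:ℝ)))
        exact this
      exact continuousAt_const.div hbase (by norm_num [Real.one_rpow])
    have hv1 : (fun δ : ℝ => r ^ (-α) / (1 + δ) ^ (-α)) 0 = r ^ (-α) := by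
      norm_num [Real.one_rpow]
    have hv2 : (fun δ : ℝ => r ^ (-α) / (1 - δ) ^ (-α)) 0 = r ^ (-α) := by
      norm_num [Real.one_rpow]
    have e1 : ∀ᶠ δ : ℝ in nhds 0, r ^ (-α) / (1 + δ) ^ (-α) < r ^ (-α) + ε / 2 := by
      have h := hc1.tendsto
      norm_num [Real.one_rpow] at h
      exact h.eventually_lt_const (by linarith)
    have e2 : ∀ᶠ δ : ℝ in nhds 0, r ^ (-α) - ε / 2 < r ^ (-α) / (1 - δ) ^ (-α) := by
      have h := hc2.tendsto
      norm_num [Real.one_rpow] at h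
      exact h.eventually_const_lt (by linarith)
    have e3 : ∀ᶠ δ : ℝ in nhds 0, δ < 1 := tendsto_id.eventually_lt_const one_pos
    have hall := (e3.and (e1.and e2)).filter_mono (nhdsWithin_le_nhds (s := Set.Ioi (0:ℝ)))
    have := hall.and (eventually_mem_nhdsWithin (a := (0:ℝ)) (s := Set.Ioi 0))
    obtain ⟨δ, ⟨h1, h2, h3⟩, h4⟩ := this.exists
    exact ⟨δ, ⟨h1, h2, h3⟩, h4⟩
  obtain ⟨hδ1, hub, hlb⟩ := hδbounds
  -- eventual facts
  have hF1 : 0 < Fbar 1 := hpos 1 one_pos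
  have hinv : Tendsto (fun t : ℝ => 1 / t) atTop (nhds 0) := by
    simpa [one_div] using (tendsto_inv_atTop_zero (𝕜 := ℝ))
  have hrat1 := (hratio (1 + δ) (by linarith)).eventually_lt_const hub
  have hrat2 := (hratio (1 - δ) (by linarith)).eventually_const_lt hlb
  filter_upwards [hrat1, hrat2, hinv.eventually_lt_const hF1, eventually_gt_atTop (0:ℝ),
    hmtop.eventually_ge_atTop 1] with t hR1 hR2 htF htpos hm1
  set m := mFun Fbar t with hmdef
  have hmpos : (0:ℝ) < m := lt_of_lt_of_le one_pos hm1
  -- basic facts about the inf set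
  have hne : {x : ℝ | Fbar x ≤ 1 / t}.Nonempty := by
    obtain ⟨x, hx⟩ := (h0.eventually_lt_const (by positivity : (0:ℝ) < 1 / t)).exists
    exact ⟨x, le_of_lt hx⟩
  have hbdd : BddBelow {x : ℝ | Fbar x ≤ 1 / t} := by
    refine ⟨1, fun y hy => ?_⟩
    by_contra hcon
    push_neg at hcon
    have := hanti hcon.le
    simp only [Set.mem_setOf_eq] at hy
    linarith
  have hupper : ∀ x : ℝ, m < x → Fbar x ≤ 1 / t := by
    intro x hx
    obtain ⟨y, hyS, hyx⟩ := (csInf_lt_iff hbdd hne).1 hx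
    exact le_trans (hanti hyx.le) hyS
  have hlower : ∀ x : ℝ, x < m → 1 / t < Fbar x := by
    intro x hx
    by_contra hcon
    push_neg at hcon
    exact absurd (csInf_le hbdd hcon) (not_le.2 hx)
  have key1 : Fbar ((1 + δ) * m) ≤ 1 / t := hupper _ (by nlinarith)
  have key2 : 1 / t < Fbar ((1 - δ) * m) := hlower _ (by nlinarith)
  have P1 : 0 < Fbar (r * m) := hpos _ (by positivity)
  have P2 : 0 < Fbar ((1 + δ) * m) := hpos _ (by nlinarith)
  have P3 : 0 < Fbar ((1 - δ) * m) := hpos _ (by nlinarith)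
  have hub' : t * Fbar (r * m) ≤ Fbar (r * m) / Fbar ((1 + δ) * m) := by
    rw [le_div_iff₀ P2]
    have h1 : t * Fbar ((1 + δ) * m) ≤ 1 := by
      rw [le_div_iff₀ htpos] at key1
      rw [mul_comm]; exact key1
    nlinarith
  have hlb' : Fbar (r * m) / Fbar ((1 - δ) * m) ≤ t * Fbar (r * m) := by
    rw [div_le_iff₀ P3]
    have h1 : 1 ≤ t * Fbar ((1 - δ) * m) := by
      rw [div_lt_iff₀ htpos] at key2
      rw [mul_comm]; exact key2.le
    nlinarith
  rw [Real.dist_eq, abs_sub_lt_iff]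
  constructor
  · have := le_trans hub' hR1.le
    linarith
  · have := le_trans hR2.le hlb'
    linarith

private lemma parity_card (A B cc : ℤ) :
    (((Finset.Ioo A B).filter (fun x => (cc + x) % 2 = 0)).card : ℤ)
      = ((B - cc + 1)/2 - (A - cc)/2 - 1).toNat := by
  have hmap : (Finset.Ioo A B).filter (fun x => (cc + x) % 2 = 0)
      = (Finset.Ioo ((A - cc)/2) ((B - cc + 1)/2)).map
          ⟨fun y => 2*y + cc, fun y z h => by simp only [add_left_inj] at h; omega⟩ := by
    ext x
    simp only [Finset.mem_filter, Finset.mem_Ioo, Finset.mem_map, Function.Embedding.coeFn_mk]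
    constructor
    · rintro ⟨⟨h1, h2⟩, h3⟩
      exact ⟨(x - cc)/2, ⟨by omega, by omega⟩, by show 2 * ((x - cc)/2) + cc = x; omega⟩
    · rintro ⟨y, ⟨h1, h2⟩, rfl⟩
      show (A < 2*y+cc ∧ 2*y+cc < B) ∧ (cc + (2*y+cc)) % 2 = 0
      exact ⟨⟨by omega, by omega⟩, by omega⟩
  rw [hmap, Finset.card_map, Int.card_Ioo]

private lemma parity_card_bounds (A B cc : ℤ) (hAB : A + 5 ≤ B) :
    B - A - 4 ≤ 2 * (((Finset.Ioo A B).filter (fun x => (cc + x) % 2 = 0)).card : ℤ) ∧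
    2 * (((Finset.Ioo A B).filter (fun x => (cc + x) % 2 = 0)).card : ℤ) ≤ B - A + 1 := by
  rw [parity_card]
  omega

private lemma idxSet_eq (s₁ s₂ a b : ℝ) (hs1 : 0 ≤ s₁) (hs2 : s₂ ≤ 1) (n : ℕ) (hn : 1 ≤ n) :
    idxSet n s₁ s₂ a b =
      ((Finset.Ioo ⌊s₁ * n⌋ ⌈s₂ * n⌉ ×ˢ Finset.Ioo ⌊a * Real.sqrt n⌋ ⌈b * Real.sqrt n⌉).filter
        (fun v => (v.1 + v.2) % 2 = 0)) := by
  have hn0 : (0:ℝ) < n := by exact_mod_cast hn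
  have hsq : (0:ℝ) < Real.sqrt n := Real.sqrt_pos.2 hn0
  ext ⟨i, x⟩
  simp only [idxSet, Finset.mem_filter, Finset.mem_product, Finset.mem_Icc, Finset.mem_Ioo]
  constructor
  · rintro ⟨⟨hi, hx⟩, hpar, h1, h2, h3, h4⟩
    exact ⟨⟨⟨Int.floor_lt.2 ((lt_div_iff₀ hn0).1 h1), Int.lt_ceil.2 ((div_lt_iff₀ hn0).1 h2)⟩,
      Int.floor_lt.2 ((lt_div_iff₀ hsq).1 h3), Int.lt_ceil.2 ((div_lt_iff₀ hsq).1 h4)⟩, hpar⟩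
  · rintro ⟨⟨⟨hi1, hi2⟩, hx1, hx2⟩, hpar⟩
    have hi1' : s₁ * n < (i:ℝ) := Int.floor_lt.1 hi1
    have hi2' : (i:ℝ) < s₂ * n := Int.lt_ceil.1 hi2
    have hx1' : a * Real.sqrt n < (x:ℝ) := Int.floor_lt.1 hx1
    have hx2' : (x:ℝ) < b * Real.sqrt n := Int.lt_ceil.1 hx2
    refine ⟨⟨⟨?_, ?_⟩, ?_, ?_⟩, hpar, ?_, ?_, ?_, ?_⟩
    · have h0 : (0:ℝ) ≤ s₁ * n := by positivity
      have : (0:ℝ) < (i:ℝ) := lt_of_le_of_lt h0 hi1'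
      exact_mod_cast this.le
    · have : (i:ℝ) < (n:ℝ) := lt_of_lt_of_le hi2' (by nlinarith)
      have h' : (i:ℝ) ≤ (n:ℝ) := this.le
      exact_mod_cast h'
    · have := Int.ceil_le_floor_add_one (a * Real.sqrt n)
      omega
    · have := Int.ceil_le_floor_add_one (b * Real.sqrt n)
      omega
    · exact (lt_div_iff₀ hn0).2 hi1'
    · exact (div_lt_iff₀ hn0).2 hi2'
    · exact (lt_div_iff₀ hsq).2 hx1'
    · exact (div_lt_iff₀ hsq).2 hx2'

private lemma count_limit (s₁ s₂ a b : ℝ) (hs1 : 0 ≤ s₁) (hs12 : s₁ < s₂) (hs2 : s₂ ≤ 1)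
    (hab : a < b) :
    Tendsto (fun n : ℕ => ((idxSet n s₁ s₂ a b).card : ℝ) / (n:ℝ) ^ ((3:ℝ)/2)) atTop
      (nhds ((s₂ - s₁) * (b - a) / 2)) := by
  have hsqrtR : Tendsto Real.sqrt atTop atTop := by
    rw [show Real.sqrt = fun x : ℝ => x ^ ((1:ℝ)/2) from funext Real.sqrt_eq_rpow]
    exact tendsto_rpow_atTop (by norm_num)
  have hsqrtN : Tendsto (fun n : ℕ => Real.sqrt n) atTop atTop :=
    hsqrtR.comp tendsto_natCast_atTop_atTop
  have hN : Tendsto (fun n : ℕ => (n:ℝ)) atTop atTop := tendsto_natCast_atTop_atTop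
  have hinvN : Tendsto (fun n : ℕ => 1 / (n:ℝ)) atTop (nhds 0) :=
    tendsto_one_div_atTop_nhds_zero_nat
  have hinvS : Tendsto (fun n : ℕ => 4 / Real.sqrt n) atTop (nhds 0) :=
    tendsto_const_nhds.div_atTop hsqrtN
  have hinvS3 : Tendsto (fun n : ℕ => 3 / Real.sqrt n) atTop (nhds 0) :=
    tendsto_const_nhds.div_atTop hsqrtN
  have hinv2 : Tendsto (fun n : ℕ => 2 / (n:ℝ)) atTop (nhds 0) :=
    tendsto_const_nhds.div_atTop hN
  have hloT : Tendsto (fun n : ℕ => ((s₂ - s₁) - 1/(n:ℝ)) * ((b - a) - 4/Real.sqrt n) / 2)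
      atTop (nhds ((s₂ - s₁) * (b - a) / 2)) := by
    have h := (((tendsto_const_nhds (x := s₂ - s₁)).sub hinvN).mul ((tendsto_const_nhds (x := b - a)).sub hinvS)).div_const 2
    simpa using h
  have hhiT : Tendsto (fun n : ℕ => ((s₂ - s₁) + 2/(n:ℝ)) * ((b - a) + 3/Real.sqrt n) / 2)
      atTop (nhds ((s₂ - s₁) * (b - a) / 2)) := by
    have h := (((tendsto_const_nhds (x := s₂ - s₁)).add hinv2).mul ((tendsto_const_nhds (x := b - a)).add hinvS3)).div_const 2
    simpa using h
  have hev : ∀ᶠ n : ℕ in atTop,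
      ((s₂ - s₁) - 1/(n:ℝ)) * ((b - a) - 4/Real.sqrt n) / 2
          ≤ ((idxSet n s₁ s₂ a b).card : ℝ) / (n:ℝ) ^ ((3:ℝ)/2)
      ∧ ((idxSet n s₁ s₂ a b).card : ℝ) / (n:ℝ) ^ ((3:ℝ)/2)
          ≤ ((s₂ - s₁) + 2/(n:ℝ)) * ((b - a) + 3/Real.sqrt n) / 2 := by
    have hev5 : ∀ᶠ n : ℕ in atTop, 5 ≤ (b - a) * Real.sqrt n :=
      (hsqrtN.const_mul_atTop (sub_pos.2 hab)).eventually_ge_atTop 5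
    have hev1 : ∀ᶠ n : ℕ in atTop, 1 ≤ (s₂ - s₁) * (n:ℝ) :=
      (hN.const_mul_atTop (sub_pos.2 hs12)).eventually_ge_atTop 1
    filter_upwards [hev5, hev1, eventually_ge_atTop 1] with n h5 h1 hn1
    have hn0 : (0:ℝ) < n := by exact_mod_cast hn1
    have hsq0 : (0:ℝ) < Real.sqrt n := Real.sqrt_pos.2 hn0
    set I₁ := ⌊s₁ * (n:ℝ)⌋ with hI₁
    set I₂ := ⌈s₂ * (n:ℝ)⌉ with hI₂
    set A := ⌊a * Real.sqrt n⌋ with hA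
    set B := ⌈b * Real.sqrt n⌉ with hB
    have hAfl : (A:ℝ) ≤ a * Real.sqrt n := Int.floor_le _
    have hAfl' : a * Real.sqrt n - 1 < (A:ℝ) := Int.sub_one_lt_floor _
    have hBce : b * Real.sqrt n ≤ (B:ℝ) := Int.le_ceil _
    have hBce' : (B:ℝ) < b * Real.sqrt n + 1 := Int.ceil_lt_add_one _
    have hIfl : (I₁:ℝ) ≤ s₁ * n := Int.floor_le _
    have hIfl' : s₁ * n - 1 < (I₁:ℝ) := Int.sub_one_lt_floor _
    have hIce : s₂ * n ≤ (I₂:ℝ) := Int.le_ceil _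
    have hIce' : (I₂:ℝ) < s₂ * n + 1 := Int.ceil_lt_add_one _
    have hAB : A + 5 ≤ B := by
      have h' : (A:ℝ) + 5 ≤ (B:ℝ) := by nlinarith
      exact_mod_cast h'
    rw [idxSet_eq s₁ s₂ a b hs1 hs2 n hn1]
    set c := fun i : ℤ => (((Finset.Ioo A B).filter (fun x => (i + x) % 2 = 0)).card) with hc
    have hsplit : (((Finset.Ioo I₁ I₂ ×ˢ Finset.Ioo A B).filter
        (fun v : ℤ × ℤ => (v.1 + v.2) % 2 = 0)).card) = ∑ i ∈ Finset.Ioo I₁ I₂, c i := by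
      rw [Finset.card_filter, Finset.sum_product]
      exact Finset.sum_congr rfl fun i _ => (Finset.card_filter _ _).symm
    rw [hsplit]
    set S := ∑ i ∈ Finset.Ioo I₁ I₂, c i with hS
    set J := (Finset.Ioo I₁ I₂).card with hJ
    have hsum_low : (J : ℤ) * (B - A - 4) ≤ ∑ i ∈ Finset.Ioo I₁ I₂, (2 * (c i : ℤ)) := by
      have := Finset.card_nsmul_le_sum (Finset.Ioo I₁ I₂)
        (fun i => 2 * (c i : ℤ)) (B - A - 4)
        (fun i _ => (parity_card_bounds A B i hAB).1)
      rwa [nsmul_eq_mul] at this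
    have hsum_up : ∑ i ∈ Finset.Ioo I₁ I₂, (2 * (c i : ℤ)) ≤ (J : ℤ) * (B - A + 1) := by
      have := Finset.sum_le_card_nsmul (Finset.Ioo I₁ I₂)
        (fun i => 2 * (c i : ℤ)) (B - A + 1)
        (fun i _ => (parity_card_bounds A B i hAB).2)
      rwa [nsmul_eq_mul] at this
    have hsum_eq : ∑ i ∈ Finset.Ioo I₁ I₂, (2 * (c i : ℤ)) = 2 * (S : ℤ) := by
      rw [hS]
      push_cast
      rw [Finset.mul_sum]
    rw [hsum_eq] at hsum_low hsum_up
    have hRlow : (J:ℝ) * ((B:ℝ) - (A:ℝ) - 4) ≤ 2 * (S:ℝ) := by exact_mod_cast hsum_low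
    have hRup : 2 * (S:ℝ) ≤ (J:ℝ) * ((B:ℝ) - (A:ℝ) + 1) := by exact_mod_cast hsum_up
    -- J bounds
    have hJlowR : (s₂ - s₁) * n - 1 ≤ (J:ℝ) := by
      have h' : (I₂ - I₁ - 1 : ℤ) ≤ (J:ℤ) := by rw [hJ, Int.card_Ioo]; omega
      have h'' : ((I₂:ℝ) - (I₁:ℝ) - 1) ≤ (J:ℝ) := by exact_mod_cast h'
      linarith
    have hJupR : (J:ℝ) ≤ (s₂ - s₁) * n + 2 := by
      have h' : (J:ℤ) ≤ max (I₂ - I₁ - 1) 0 := by rw [hJ, Int.card_Ioo]; omega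
      have h'' : (J:ℝ) ≤ max ((I₂:ℝ) - (I₁:ℝ) - 1) 0 := by exact_mod_cast h'
      refine le_trans h'' (max_le (by linarith) (by linarith))
    have hBlowR : (b - a) * Real.sqrt n - 4 ≤ (B:ℝ) - (A:ℝ) - 4 := by linarith
    have hBupR : (B:ℝ) - (A:ℝ) + 1 ≤ (b - a) * Real.sqrt n + 3 := by linarith
    have hABR : (0:ℝ) ≤ (B:ℝ) - (A:ℝ) + 1 := by
      have : ((A:ℝ)) + 5 ≤ (B:ℝ) := by exact_mod_cast hAB
      linarith
    have h2cardLow : ((s₂ - s₁) * n - 1) * ((b - a) * Real.sqrt n - 4) ≤ 2 * (S:ℝ) :=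
      le_trans (mul_le_mul hJlowR hBlowR (by linarith) (Nat.cast_nonneg J)) hRlow
    have h2cardUp : 2 * (S:ℝ) ≤ ((s₂ - s₁) * n + 2) * ((b - a) * Real.sqrt n + 3) :=
      le_trans hRup (mul_le_mul hJupR hBupR hABR (by linarith))
    have hpow : (n:ℝ) ^ ((3:ℝ)/2) = n * Real.sqrt n := by
      rw [show (3:ℝ)/2 = 1 + 1/2 by norm_num, Real.rpow_add hn0, Real.rpow_one,
        Real.sqrt_eq_rpow]
    have hns : (0:ℝ) < (n:ℝ) * Real.sqrt n := by positivity
    constructor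
    · rw [hpow, le_div_iff₀ hns]
      have e : ((s₂ - s₁) - 1/(n:ℝ)) * ((b - a) - 4/Real.sqrt n) / 2 * ((n:ℝ) * Real.sqrt n)
          = ((s₂ - s₁) * n - 1) * ((b - a) * Real.sqrt n - 4) / 2 := by
        field_simp
      rw [e]
      linarith
    · rw [hpow, div_le_iff₀ hns]
      have e : ((s₂ - s₁) + 2/(n:ℝ)) * ((b - a) + 3/Real.sqrt n) / 2 * ((n:ℝ) * Real.sqrt n)
          = ((s₂ - s₁) * n + 2) * ((b - a) * Real.sqrt n + 3) / 2 := by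
        field_simp
      rw [e]
      linarith
  refine tendsto_of_tendsto_of_tendsto_of_le_of_le' hloT hhiT
    (hev.mono fun n h => h.1) (hev.mono fun n h => h.2)

theorem stmt16
    {Ω : Type*} [MeasurableSpace Ω] (μ : Measure Ω) [IsProbabilityMeasure μ]
    (env : ℤ × ℤ → Ω → ℝ)
    (hmeas : ∀ v, Measurable (env v))
    (hindep : iIndepFun env μ)
    (hident : ∀ v w, IdentDistrib (env v) (env w) μ μ)
    (α : ℝ) (hα : 0 < α)
    (L : ℝ → ℝ) (hLpos : ∀ x > 0, 0 < L x) (hL : SlowlyVarying L)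
    (htail : ∀ x > 0, (μ {a | x < env (0, 0) a}).toReal = x ^ (-α) * L x)
    (r : ℝ) (hr : 0 < r) (s₁ s₂ a b : ℝ)
    (hs : 0 ≤ s₁ ∧ s₁ < s₂ ∧ s₂ ≤ 1) (hab : a < b) :
    Tendsto (fun n => ∫ ωs, ((((idxSet n s₁ s₂ a b).filter
        (fun v => r * mFun (fun x => (μ {c | x < env (0, 0) c}).toReal)
          ((n : ℝ) ^ ((3 : ℝ) / 2)) < env v ωs)).card : ℝ)) ∂μ)
      atTop (nhds (1 / 2 * (s₂ - s₁) * (b - a) * r ^ (-α))) := by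

  obtain ⟨hs1, hs12, hs2⟩ := hs
  set Fb : ℝ → ℝ := fun x => (μ {c | x < env (0, 0) c}).toReal with hFb
  have hFanti : Antitone Fb := by
    intro x y hxy
    exact ENNReal.toReal_mono (measure_ne_top μ _)
      (measure_mono (fun c hc => lt_of_le_of_lt hxy hc))
  have hF0 : Tendsto Fb atTop (nhds 0) := by
    have hsets : ∀ k : ℕ, NullMeasurableSet {c | (k:ℝ) < env (0,0) c} μ :=
      fun k => (measurableSet_lt measurable_const (hmeas (0,0))).nullMeasurableSet
    have hanti' : Antitone (fun k : ℕ => {c | (k:ℝ) < env (0,0) c}) := by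
      intro k l hkl c hc
      simp only [Set.mem_setOf_eq] at hc ⊢
      exact lt_of_le_of_lt (by exact_mod_cast hkl) hc
    have hfin : ∃ k : ℕ, μ {c | (k:ℝ) < env (0,0) c} ≠ ⊤ := ⟨0, measure_ne_top μ _⟩
    have hIN := MeasureTheory.tendsto_measure_iInter_atTop hsets hanti' hfin
    have hempty : ⋂ k : ℕ, {c | (k:ℝ) < env (0,0) c} = ∅ := by
      ext c
      simp only [Set.mem_iInter, Set.mem_setOf_eq, Set.mem_empty_iff_false, iff_false,
        not_forall, not_lt]
      obtain ⟨k, hk⟩ := exists_nat_ge (env (0,0) c)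
      exact ⟨k, hk⟩
    rw [hempty, measure_empty] at hIN
    have hto : Tendsto (fun k : ℕ => Fb k) atTop (nhds 0) := by
      have h := (ENNReal.tendsto_toReal (by simp : (0:ENNReal) ≠ ⊤)).comp hIN
      exact h
    rw [tendsto_order]
    constructor
    · intro x hx
      filter_upwards with t
      exact lt_of_lt_of_le hx ENNReal.toReal_nonneg
    · intro x hx
      obtain ⟨k, hk⟩ := (hto.eventually_lt_const hx).exists
      filter_upwards [eventually_ge_atTop (k:ℝ)] with t ht
      exact lt_of_le_of_lt (hFanti ht) hk
  have hint : ∀ (cv : ℝ) (n : ℕ),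
      (∫ ωs, ((((idxSet n s₁ s₂ a b).filter (fun v => cv < env v ωs)).card : ℝ)) ∂μ)
        = ((idxSet n s₁ s₂ a b).card : ℝ) * (μ {c | cv < env (0,0) c}).toReal := by
    intro cv n
    have hmeasset : ∀ v : ℤ × ℤ, MeasurableSet {ωs | cv < env v ωs} := fun v =>
      measurableSet_lt measurable_const (hmeas v)
    have h1 : ∀ ωs, ((((idxSet n s₁ s₂ a b).filter (fun v => cv < env v ωs)).card : ℝ))
        = ∑ v ∈ idxSet n s₁ s₂ a b,
            Set.indicator {ωs' | cv < env v ωs'} (fun _ => (1:ℝ)) ωs := by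
      intro ωs
      rw [Finset.card_filter]
      push_cast
      refine Finset.sum_congr rfl fun v _ => ?_
      by_cases h : cv < env v ωs
      · simp [Set.indicator_of_mem, h]
      · simp [Set.indicator_of_notMem, h]
    simp_rw [h1]
    rw [MeasureTheory.integral_finset_sum _
      (fun v _ => ((integrable_const (1:ℝ)).indicator (hmeasset v)))]
    have h2 : ∀ v ∈ idxSet n s₁ s₂ a b,
        (∫ ωs, Set.indicator {ωs' | cv < env v ωs'} (fun _ => (1:ℝ)) ωs ∂μ)
          = (μ {c | cv < env (0,0) c}).toReal := by
      intro v _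
      rw [MeasureTheory.integral_indicator_const (1:ℝ) (hmeasset v)]
      have hset : {ωs' | cv < env v ωs'} = env v ⁻¹' Set.Ioi cv := rfl
      rw [smul_eq_mul, mul_one, hset, measureReal_def, (hident v (0,0)).measure_mem_eq measurableSet_Ioi]
      rfl
    rw [Finset.sum_congr rfl h2, Finset.sum_const, nsmul_eq_mul]
  have htail_lim := tail_limit Fb L α r hα hr hFanti hF0 htail hLpos hL
  have hnpow : Tendsto (fun n : ℕ => (n:ℝ) ^ ((3:ℝ)/2)) atTop atTop :=
    (tendsto_rpow_atTop (by norm_num)).comp tendsto_natCast_atTop_atTop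
  have h2 := htail_lim.comp hnpow
  have hcnt := count_limit s₁ s₂ a b hs1 hs12 hs2 hab
  have hprod := hcnt.mul h2
  have hEq : (fun n : ℕ => (((idxSet n s₁ s₂ a b).card : ℝ) / (n:ℝ) ^ ((3:ℝ)/2)) *
        (((fun t => t * Fb (r * mFun Fb t)) ∘ fun n : ℕ => (n:ℝ) ^ ((3:ℝ)/2)) n))
      =ᶠ[atTop] (fun n : ℕ => ∫ ωs, ((((idxSet n s₁ s₂ a b).filter
        (fun v => r * mFun Fb ((n : ℝ) ^ ((3 : ℝ) / 2)) < env v ωs)).card : ℝ)) ∂μ) := by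
    filter_upwards [eventually_ge_atTop 1] with n hn
    have hn0 : (0:ℝ) < (n:ℝ) ^ ((3:ℝ)/2) :=
      Real.rpow_pos_of_pos (by exact_mod_cast hn) _
    rw [hint (r * mFun Fb ((n:ℝ) ^ ((3:ℝ)/2))) n]
    simp only [Function.comp]
    have hFbeq : (μ {c | r * mFun Fb ((n:ℝ) ^ ((3:ℝ)/2)) < env (0,0) c}).toReal
        = Fb (r * mFun Fb ((n:ℝ) ^ ((3:ℝ)/2))) := rfl
    rw [hFbeq]
    field_simp
  have hfinal := hprod.congr' hEq
  have hconst : (s₂ - s₁) * (b - a) / 2 * r ^ (-α)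
      = 1 / 2 * (s₂ - s₁) * (b - a) * r ^ (-α) := by ring
  rw [hconst] at hfinal
  exact hfinal

end
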